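/- Let Λ ⊂ ℂ be a lattice of size s(Λ) (area of a fundamental domain) and σ_Λ its modified Weierstrass sigma function satisfying |σ_Λ(z)| ≲ e^{(π/(2s(Λ)))|z|²}. If s(Λ) > n+1, then the function G(z) = σ_Λ(z)^{n+1}/z is entire and belongs to the Bargmann–Fock space F₂(ℂ), i.e. ∫_ℂ |G(z)|² e^{−π|z|²} dA(z) < ∞. -/

import Mathlib

open ComplexConjugate MeasureTheory

noncomputable section

/-- If `Λ = ℤλ₁ + ℤλ₂` is a lattice of size `s(Λ) > n+1` and `σ_Λ` is its modified
Weierstrass sigma function (vanishing simply exactly on `Λ`, with Gaussian growth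
`|σ_Λ(z)| ≲ e^{(π/(2s(Λ)))|z|²}`), then `G(z) = σ_Λ(z)^{n+1}/z` is entire and belongs to the
Bargmann-Fock space `F₂(ℂ)`. -/
theorem sigma_power_in_Fock (n : ℕ) (l₁ l₂ : ℂ) (hind : LinearIndependent ℝ ![l₁, l₂])
    (s : ℝ) (hs : s = |((conj l₁) * l₂).im|)
    (σ : ℂ → ℂ) (hσ : Differentiable ℂ σ)
    (hzero : ∀ z : ℂ, σ z = 0 ↔ ∃ m₁ m₂ : ℤ, z = m₁ * l₁ + m₂ * l₂)
    (hsimple : ∀ z : ℂ, σ z = 0 → deriv σ z ≠ 0)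
    (hgrowth : ∃ Cg : ℝ, 0 < Cg ∧ ∀ z : ℂ,
      ‖σ z‖ ≤ Cg * Real.exp (Real.pi / (2 * s) * Complex.normSq z))
    (hsize : (n : ℝ) + 1 < s) :
    ∃ G : ℂ → ℂ, Differentiable ℂ G ∧ (∀ z : ℂ, G z * z = σ z ^ (n + 1)) ∧
      Integrable (fun z : ℂ => ‖G z‖ ^ 2 * Real.exp (-Real.pi * Complex.normSq z))
        (volume : Measure ℂ) := by
  obtain ⟨Cg, hCg, hg⟩ := hgrowth
  have hσ0 : σ 0 = 0 := (hzero 0).2 ⟨0, 0, by simp⟩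
  set f : ℂ → ℂ := fun z => σ z ^ (n + 1) with hf
  have hfdiff : Differentiable ℂ f := fun z => (hσ z).pow _
  have hf0 : f 0 = 0 := by simp [hf, hσ0]
  set G : ℂ → ℂ := dslope f 0 with hG
  have hGdiff : Differentiable ℂ G := by
    rw [← differentiableOn_univ]
    exact (Complex.differentiableOn_dslope (by simp)).2 hfdiff.differentiableOn
  have hGmul : ∀ z : ℂ, G z * z = σ z ^ (n + 1) := by
    intro z
    rcases eq_or_ne z 0 with rfl | hz
    · simp [hσ0]
    · rw [hG, dslope_of_ne f hz]
      rw [slope_def_field, hf0, sub_zero, sub_zero]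
      exact div_mul_cancel₀ _ hz
  refine ⟨G, hGdiff, hGmul, ?_⟩
  -- positivity of s
  have hspos : (0 : ℝ) < s := lt_trans (by positivity) hsize
  set c : ℝ := Real.pi - Real.pi * (n + 1) / s with hc
  have hcpos : 0 < c := by
    rw [hc, sub_pos]
    rw [div_lt_iff₀ hspos]
    calc Real.pi * (n + 1) < Real.pi * s := by
          exact (mul_lt_mul_iff_right₀ Real.pi_pos).2 hsize
      _ = Real.pi * s := rfl
  -- bound on the unit ball
  obtain ⟨B, hB⟩ : ∃ B : ℝ, ∀ z ∈ Metric.closedBall (0:ℂ) 1, ‖G z‖ ≤ B := by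
    obtain ⟨B, hB⟩ := (isCompact_closedBall (0:ℂ) 1).exists_bound_of_continuousOn
      hGdiff.continuous.continuousOn
    exact ⟨B, hB⟩
  have hBnn : 0 ≤ B := le_trans (norm_nonneg _) (hB 0 (by simp))
  set M : ℝ := max (B ^ 2 * Real.exp c) (Cg ^ (2 * (n + 1))) with hM
  have hbound : ∀ z : ℂ, ‖G z‖ ^ 2 * Real.exp (-Real.pi * Complex.normSq z)
      ≤ M * Real.exp (-c * ‖z‖ ^ 2) := by
    intro z
    have hnSq : Complex.normSq z = ‖z‖ ^ 2 := by
      rw [Complex.normSq_eq_norm_sq]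
    rcases le_or_gt ‖z‖ 1 with h1 | h1
    · have hGz : ‖G z‖ ≤ B := hB z (by simpa [Metric.mem_closedBall] using h1)
      have h2 : Real.exp (-Real.pi * Complex.normSq z) ≤ 1 := by
        rw [Real.exp_le_one_iff]
        have := Complex.normSq_nonneg z
        nlinarith [Real.pi_pos]
      calc ‖G z‖ ^ 2 * Real.exp (-Real.pi * Complex.normSq z)
          ≤ B ^ 2 * 1 := by
            apply mul_le_mul _ h2 (Real.exp_nonneg _) (by positivity)
            exact pow_le_pow_left₀ (norm_nonneg _) hGz 2
        _ = B ^ 2 := mul_one _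
        _ ≤ B ^ 2 * Real.exp c * Real.exp (-c * ‖z‖ ^ 2) := by
            rw [mul_assoc, ← Real.exp_add]
            have hsq : ‖z‖ ^ 2 ≤ 1 := pow_le_one₀ (norm_nonneg z) h1
            have : 0 ≤ c + -c * ‖z‖ ^ 2 := by nlinarith
            nlinarith [Real.one_le_exp this, sq_nonneg B]
        _ ≤ M * Real.exp (-c * ‖z‖ ^ 2) := by
            apply mul_le_mul_of_nonneg_right (le_max_left _ _) (Real.exp_nonneg _)
    · -- ‖z‖ > 1 : use growth bound
      have hz : z ≠ 0 := by intro h; rw [h, norm_zero] at h1; linarith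
      have hGz : ‖G z‖ ≤ ‖σ z‖ ^ (n + 1) := by
        have := hGmul z
        have h3 : ‖G z‖ * ‖z‖ = ‖σ z‖ ^ (n + 1) := by
          rw [← norm_mul, this, norm_pow]
        calc ‖G z‖ = ‖G z‖ * 1 := (mul_one _).symm
          _ ≤ ‖G z‖ * ‖z‖ := by
              apply mul_le_mul_of_nonneg_left h1.le (norm_nonneg _)
          _ = ‖σ z‖ ^ (n + 1) := h3
      have hσz : ‖σ z‖ ≤ Cg * Real.exp (Real.pi / (2 * s) * Complex.normSq z) := hg z
      have key : ‖G z‖ ^ 2 ≤ Cg ^ (2 * (n + 1)) *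
          Real.exp (Real.pi * (n + 1) / s * ‖z‖ ^ 2) := by
        calc ‖G z‖ ^ 2 ≤ (‖σ z‖ ^ (n + 1)) ^ 2 :=
              pow_le_pow_left₀ (norm_nonneg _) hGz 2
          _ = (‖σ z‖ ^ 2) ^ (n + 1) := by ring
          _ ≤ ((Cg * Real.exp (Real.pi / (2 * s) * Complex.normSq z)) ^ 2) ^ (n + 1) := by
              apply pow_le_pow_left₀ (by positivity)
              exact pow_le_pow_left₀ (norm_nonneg _) hσz 2
          _ = Cg ^ (2 * (n + 1)) *
              Real.exp (Real.pi / (2 * s) * ‖z‖ ^ 2) ^ (2 * (n + 1)) := by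
              rw [hnSq, pow_mul, pow_mul, ← mul_pow, mul_pow]
          _ = Cg ^ (2 * (n + 1)) * Real.exp (Real.pi * (n + 1) / s * ‖z‖ ^ 2) := by
              rw [← Real.exp_nat_mul]
              congr 1
              push_cast
              field_simp
      calc ‖G z‖ ^ 2 * Real.exp (-Real.pi * Complex.normSq z)
          ≤ Cg ^ (2 * (n + 1)) * Real.exp (Real.pi * (n + 1) / s * ‖z‖ ^ 2) *
            Real.exp (-Real.pi * ‖z‖ ^ 2) := by
            rw [hnSq]
            exact mul_le_mul_of_nonneg_right key (Real.exp_nonneg _)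
        _ = Cg ^ (2 * (n + 1)) * Real.exp (-c * ‖z‖ ^ 2) := by
            rw [mul_assoc, ← Real.exp_add]
            congr 2
            rw [hc]; ring
        _ ≤ M * Real.exp (-c * ‖z‖ ^ 2) := by
            apply mul_le_mul_of_nonneg_right (le_max_right _ _) (Real.exp_nonneg _)
  -- integrability of gaussian on ℂ
  have hgauss : Integrable (fun z : ℂ => M * Real.exp (-c * ‖z‖ ^ 2)) volume := by
    apply Integrable.const_mul
    have := (GaussianFourier.integrable_cexp_neg_mul_sq_norm_add (V := ℂ)
      (b := (c : ℂ)) (by simpa using hcpos) 0 0).norm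
    simp only [zero_mul, mul_zero, add_zero, Complex.norm_exp] at this
    simp only [neg_mul]
    convert this using 2 with v
    simp [← Complex.ofReal_pow, ← Complex.ofReal_mul, ← Complex.ofReal_neg,
      Complex.ofReal_re]
  apply Integrable.mono' hgauss
  · apply Continuous.aestronglyMeasurable
    apply Continuous.mul
    · exact (hGdiff.continuous.norm.pow 2)
    · exact (Real.continuous_exp.comp (by continuity))
  · filter_upwards with z
    rw [Real.norm_of_nonneg (by positivity)]
    exact hbound z
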